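/- Let (W,S) be a Coxeter system with length function ℓ. Suppose 𝐬 = (s_1,…,s_q) is a word in S whose Demazure product is w, where w is fully commutative, and suppose q > ℓ(w). Then there exist indices i < j such that s_i = s_j and s_i commutes with s_k for every k with i < k < j. -/

import Mathlib

/-- The Demazure product of a word in a Coxeter system. -/
noncomputable def demazureProd {B : Type*} {W : Type*} [Group W] {M : CoxeterMatrix B}
    (cs : CoxeterSystem M W) : List B → W
  | [] => 1
  | s :: t =>
      if cs.length (cs.simple s * demazureProd cs t) > cs.length (demazureProd cs t)
      then cs.simple s * demazureProd cs t
      else demazureProd cs t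

/-- `ω` is a reduced word for `w`: its product is `w` and its length is `ℓ(w)`. -/
def IsReducedWordFor {B : Type*} {W : Type*} [Group W] {M : CoxeterMatrix B}
    (cs : CoxeterSystem M W) (ω : List B) (w : W) : Prop :=
  cs.wordProd ω = w ∧ ω.length = cs.length w

/-- A single commutation move: swap two adjacent letters whose simple reflections commute. -/
def CommMove {B : Type*} {W : Type*} [Group W] {M : CoxeterMatrix B}
    (cs : CoxeterSystem M W) (ω ω' : List B) : Prop :=
  ∃ (l₁ l₂ : List B) (s t : B), ω = l₁ ++ s :: t :: l₂ ∧ ω' = l₁ ++ t :: s :: l₂ ∧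
    cs.simple s * cs.simple t = cs.simple t * cs.simple s

/-- `w` is fully commutative: any reduced word for `w` can be obtained from any other
by a finite sequence of commutation moves. -/
def FullyCommutative {B : Type*} {W : Type*} [Group W] {M : CoxeterMatrix B}
    (cs : CoxeterSystem M W) (w : W) : Prop :=
  ∀ ω ω' : List B, IsReducedWordFor cs ω w → IsReducedWordFor cs ω' w →
    Relation.ReflTransGen (CommMove cs) ω ω'

section Aux

variable {B : Type*} {W : Type*} [Group W] {M : CoxeterMatrix B} (cs : CoxeterSystem M W)

lemma commMove_wordProd {ω ω' : List B} (h : CommMove cs ω ω') :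
    cs.wordProd ω = cs.wordProd ω' := by
  obtain ⟨l₁, l₂, s, t, rfl, rfl, hc⟩ := h
  simp only [CoxeterSystem.wordProd_append, CoxeterSystem.wordProd_cons, ← mul_assoc, hc]

lemma commMove_length {ω ω' : List B} (h : CommMove cs ω ω') : ω.length = ω'.length := by
  obtain ⟨l₁, l₂, s, t, rfl, rfl, hc⟩ := h
  simp

lemma rtg_wordProd {ω ω' : List B} (h : Relation.ReflTransGen (CommMove cs) ω ω') :
    cs.wordProd ω = cs.wordProd ω' := by
  induction h with
  | refl => rfl
  | tail _ hstep ih => exact ih.trans (commMove_wordProd cs hstep)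

lemma rtg_length {ω ω' : List B} (h : Relation.ReflTransGen (CommMove cs) ω ω') :
    ω.length = ω'.length := by
  induction h with
  | refl => rfl
  | tail _ hstep ih => exact ih.trans (commMove_length cs hstep)

lemma rtg_cons (a : B) {ω ω' : List B} (h : Relation.ReflTransGen (CommMove cs) ω ω') :
    Relation.ReflTransGen (CommMove cs) (a :: ω) (a :: ω') := by
  induction h with
  | refl => exact Relation.ReflTransGen.refl
  | tail _ hstep ih =>
      refine ih.tail ?_
      obtain ⟨l₁, l₂, s, t, rfl, rfl, hc⟩ := hstep
      exact ⟨a :: l₁, l₂, s, t, rfl, rfl, hc⟩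

lemma moveToFront (s : B) (δ₁ δ₂ : List B)
    (h : ∀ t ∈ δ₁, cs.simple s * cs.simple t = cs.simple t * cs.simple s) :
    Relation.ReflTransGen (CommMove cs) (δ₁ ++ s :: δ₂) (s :: (δ₁ ++ δ₂)) := by
  induction δ₁ with
  | nil => exact Relation.ReflTransGen.refl
  | cons a δ₁ ih =>
      have h1 : Relation.ReflTransGen (CommMove cs) (a :: (δ₁ ++ s :: δ₂))
          (a :: s :: (δ₁ ++ δ₂)) :=
        rtg_cons cs a (ih (fun t ht => h t (List.mem_cons_of_mem a ht)))
      refine h1.tail ?_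
      exact ⟨[], δ₁ ++ δ₂, a, s, rfl, rfl, (h a List.mem_cons_self).symm⟩

lemma trackFront {s : B} {α δ : List B}
    (h : Relation.ReflTransGen (CommMove cs) (s :: α) δ) :
    ∃ δ₁ δ₂ : List B, δ = δ₁ ++ s :: δ₂ ∧
      (∀ t ∈ δ₁, cs.simple s * cs.simple t = cs.simple t * cs.simple s) ∧
      Relation.ReflTransGen (CommMove cs) α (δ₁ ++ δ₂) := by
  induction h with
  | refl => exact ⟨[], α, rfl, by simp, Relation.ReflTransGen.refl⟩
  | @tail γ δ _ hstep ih =>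
      obtain ⟨δ₁, δ₂, rfl, hcomm, hrtg⟩ := ih
      obtain ⟨l₁, l₂, a, b, heq, rfl, hc⟩ := hstep
      rcases List.append_eq_append_iff.mp heq with ⟨m, hl₁, hm⟩ | ⟨c, hδ₁, hc'⟩
      · -- l₁ = δ₁ ++ m, s :: δ₂ = m ++ a :: b :: l₂
        rcases m with _ | ⟨x, m'⟩
        · simp only [List.nil_append, List.cons.injEq] at hm
          obtain ⟨rfl, rfl⟩ := hm
          simp only [List.append_nil] at hl₁
          subst hl₁
          refine ⟨l₁ ++ [b], l₂, by simp, ?_, ?_⟩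
          · intro t ht
            rcases List.mem_append.mp ht with ht | ht
            · exact hcomm t ht
            · simp only [List.mem_singleton] at ht; subst ht; exact hc
          · simpa using hrtg
        · simp only [List.cons_append, List.cons.injEq] at hm
          obtain ⟨rfl, rfl⟩ := hm
          subst hl₁
          refine ⟨δ₁, m' ++ b :: a :: l₂, by simp, hcomm, ?_⟩
          refine hrtg.tail ?_
          exact ⟨δ₁ ++ m', l₂, a, b, by simp, by simp, hc⟩
      · -- δ₁ = l₁ ++ c, a :: b :: l₂ = c ++ s :: δ₂
        rcases c with _ | ⟨y, c'⟩
        · simp only [List.nil_append, List.cons.injEq] at hc'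
          obtain ⟨rfl, rfl⟩ := hc'
          simp only [List.append_nil] at hδ₁
          subst hδ₁
          refine ⟨δ₁ ++ [b], l₂, by simp, ?_, ?_⟩
          · intro t ht
            rcases List.mem_append.mp ht with ht | ht
            · exact hcomm t ht
            · simp only [List.mem_singleton] at ht; subst ht; exact hc
          · simpa using hrtg
        · rcases c' with _ | ⟨z, c''⟩
          · simp only [List.cons_append, List.nil_append, List.cons.injEq] at hc'
            obtain ⟨rfl, rfl, rfl⟩ := hc'
            subst hδ₁
            refine ⟨l₁, a :: l₂, by simp, ?_, ?_⟩
            · intro t ht; exact hcomm t (by simp [ht])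
            · simpa using hrtg
          · simp only [List.cons_append, List.cons.injEq] at hc'
            obtain ⟨rfl, rfl, rfl⟩ := hc'
            subst hδ₁
            refine ⟨l₁ ++ b :: a :: c'', δ₂, by simp, ?_, ?_⟩
            · intro t ht
              refine hcomm t ?_
              simp only [List.mem_append, List.mem_cons] at ht ⊢
              tauto
            · refine hrtg.tail ?_
              exact ⟨l₁, c'' ++ δ₂, a, b, by simp, by simp, hc⟩

lemma fc_of_descent {w : W} (hfc : FullyCommutative cs w) (s : B)
    (hd : cs.length (cs.simple s * w) < cs.length w) :
    FullyCommutative cs (cs.simple s * w) := by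
  set u := cs.simple s * w with hu
  have hsu : cs.simple s * u = w := by
    rw [hu, ← mul_assoc, cs.simple_mul_simple_self, one_mul]
  have hlu : cs.length u + 1 = cs.length w := by
    have h' := cs.length_simple_mul w s
    rw [← hu] at h'
    rcases h' with h' | h' <;> omega
  intro α β hα hβ
  have hαw : IsReducedWordFor cs (s :: α) w := by
    constructor
    · rw [cs.wordProd_cons, hα.1, hsu]
    · simp [hα.2, hlu]
  have hβw : IsReducedWordFor cs (s :: β) w := by
    constructor
    · rw [cs.wordProd_cons, hβ.1, hsu]
    · simp [hβ.2, hlu]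
  have hrtg := hfc _ _ hαw hβw
  obtain ⟨δ₁, δ₂, heq, hcomm, hrtg'⟩ := trackFront cs hrtg
  match δ₁, heq with
  | [], heq =>
      obtain ⟨rfl⟩ : β = δ₂ := by simpa using heq
      simpa using hrtg'
  | c :: δ₁', heq =>
      exfalso
      obtain ⟨rfl, hβeq⟩ : s = c ∧ β = δ₁' ++ s :: δ₂ := by
        simpa using heq
      have hmove : Relation.ReflTransGen (CommMove cs) β (s :: (δ₁' ++ δ₂)) := by
        rw [hβeq]
        exact moveToFront cs s δ₁' δ₂ (fun t ht => hcomm t (by simp [ht]))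
      have hprod : cs.wordProd β = cs.simple s * cs.wordProd (δ₁' ++ δ₂) := by
        rw [rtg_wordProd cs hmove, cs.wordProd_cons]
      have hlen : β.length = (δ₁' ++ δ₂).length + 1 := by
        rw [rtg_length cs hmove]; simp
      have hw : cs.wordProd (δ₁' ++ δ₂) = w := by
        have : cs.simple s * cs.wordProd (δ₁' ++ δ₂) = u := by rw [← hprod, hβ.1]
        rw [← hsu, ← this, ← mul_assoc, cs.simple_mul_simple_self, one_mul]
      have h1 : cs.length w ≤ (δ₁' ++ δ₂).length := by
        rw [← hw]; exact cs.length_wordProd_le _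
      have h2 : β.length = cs.length u := hβ.2
      omega

lemma length_demazureProd_le : ∀ ω : List B, cs.length (demazureProd cs ω) ≤ ω.length := by
  intro ω
  induction ω with
  | nil => simp [demazureProd]
  | cons s t ih =>
      rw [demazureProd]
      split
      · rename_i hgt
        rcases cs.length_simple_mul (demazureProd cs t) s with h | h
        · simp only [List.length_cons]; omega
        · omega
      · simp only [List.length_cons]; omega

lemma wordProd_of_demazure_len : ∀ ω : List B,
    cs.length (demazureProd cs ω) = ω.length → cs.wordProd ω = demazureProd cs ω := by
  intro ω
  induction ω with
  | nil => simp [demazureProd, CoxeterSystem.wordProd_nil]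
  | cons s t ih =>
      rw [demazureProd]
      split
      · rename_i hgt
        intro hl
        have h1 := length_demazureProd_le cs t
        rcases cs.length_simple_mul (demazureProd cs t) s with h | h
        · have : cs.length (demazureProd cs t) = t.length := by
            simp only [List.length_cons] at hl; omega
          rw [cs.wordProd_cons, ih this]
        · omega
      · rename_i hgt
        intro hl
        have h1 := length_demazureProd_le cs t
        simp only [List.length_cons] at hl
        omega

end Aux

/-- If the Demazure product of `ω` is a fully commutative element `w` and the length of
`ω` exceeds `ℓ(w)`, then there are positions `i < j` carrying the same letter such that
this letter commutes with every letter strictly between them. -/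
theorem stmt_3 {B : Type*} {W : Type*} [Group W] {M : CoxeterMatrix B}
    (cs : CoxeterSystem M W) (w : W) (hfc : FullyCommutative cs w)
    (ω : List B) (h : demazureProd cs ω = w) (hlen : cs.length w < ω.length) :
    ∃ (i j : ℕ) (hi : i < ω.length) (hj : j < ω.length), i < j ∧
      ω.get ⟨i, hi⟩ = ω.get ⟨j, hj⟩ ∧
      ∀ (k : ℕ) (hk : k < ω.length), i < k → k < j →
        Commute (cs.simple (ω.get ⟨i, hi⟩)) (cs.simple (ω.get ⟨k, hk⟩)) := by
  induction ω generalizing w with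
  | nil => simp at hlen
  | cons s t ih =>
      rw [demazureProd] at h
      simp only [List.length_cons] at hlen
      by_cases hc : cs.length (cs.simple s * demazureProd cs t) > cs.length (demazureProd cs t)
      · -- w = s * u
        rw [if_pos hc] at h
        set u := demazureProd cs t with hu
        have hsw : cs.simple s * w = u := by
          rw [← h, ← mul_assoc, cs.simple_mul_simple_self, one_mul]
        have hlu : cs.length u + 1 = cs.length w := by
          have h' := cs.length_simple_mul u s
          rw [h] at h' hc
          rcases h' with h' | h' <;> omega
        have hufc : FullyCommutative cs u := by
          have hd' : cs.length (cs.simple s * w) < cs.length w := by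
            rw [hsw]; omega
          rw [← hsw]
          exact fc_of_descent cs hfc s hd'

        have hult : cs.length u < t.length := by omega
        obtain ⟨i, j, hi, hj, hij, hget, hcomm⟩ := ih u hufc rfl hult
        refine ⟨i + 1, j + 1, by simpa using Nat.succ_lt_succ hi,
          by simpa using Nat.succ_lt_succ hj, Nat.succ_lt_succ hij, ?_, ?_⟩
        · simpa using hget
        · intro k hk h1k h2k
          obtain ⟨k', rfl⟩ : ∃ k', k = k' + 1 := ⟨k - 1, by omega⟩
          have hk' : k' < t.length := by simpa using hk
          simpa using hcomm k' hk' (by omega) (by omega)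
      · rw [if_neg hc] at h
        push_neg at hc
        by_cases heq : cs.length w = t.length
        · -- t is a reduced word for w; s is a left descent
          have htred : cs.wordProd t = w := by
            rw [wordProd_of_demazure_len cs t (by rw [h, heq]), h]
          have hd : cs.length (cs.simple s * w) < cs.length w := by
            rcases cs.length_simple_mul w s with h' | h'
            · rw [← h] at h'; omega
            · omega
          obtain ⟨r, hr1, hr2⟩ := cs.exists_reduced_word (cs.simple s * w)
          have hsr : IsReducedWordFor cs (s :: r) w := by
            constructor
            · rw [cs.wordProd_cons, ← hr2, ← mul_assoc, cs.simple_mul_simple_self, one_mul]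
            · simp only [List.length_cons, ← hr1.eq, ← hr2]
              rcases cs.length_simple_mul w s with h' | h'
              · omega
              · omega
          have htw : IsReducedWordFor cs t w := ⟨htred, heq.symm⟩
          have hrtg := hfc _ _ hsr htw
          obtain ⟨δ₁, δ₂, hteq, hcomm, _⟩ := trackFront cs hrtg
          subst hteq
          refine ⟨0, δ₁.length + 1, by simp, ?_, by omega, ?_, ?_⟩
          · simp only [List.length_cons, List.length_append]
            omega
          · simp [List.get_eq_getElem, List.getElem_append_right]
          · intro k hk h0k hkj
            obtain ⟨k', rfl⟩ : ∃ k', k = k' + 1 := ⟨k - 1, by omega⟩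
            have hk'δ : k' < δ₁.length := by omega
            simp only [List.get_eq_getElem, List.getElem_cons_zero, List.getElem_cons_succ]
            rw [List.getElem_append_left hk'δ]
            exact hcomm _ (List.getElem_mem _)
        · have hwt : cs.length w < t.length := by omega
          obtain ⟨i, j, hi, hj, hij, hget, hcomm⟩ := ih w hfc h hwt
          refine ⟨i + 1, j + 1, by simpa using Nat.succ_lt_succ hi,
            by simpa using Nat.succ_lt_succ hj, Nat.succ_lt_succ hij, ?_, ?_⟩
          · simpa using hget
          · intro k hk h1k h2k
            obtain ⟨k', rfl⟩ : ∃ k', k = k' + 1 := ⟨k - 1, by omega⟩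
            have hk' : k' < t.length := by simpa using hk
            simpa using hcomm k' hk' (by omega) (by omega)
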